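/- Let G = (V,E) be a finite undirected multigraph, A, B ⊆ V², e ∈ E, and let φ be a fourientation of G \ e. Define f_φ(c) = 1 if φ ∪ c is (A,B)-valid and f_φ(c) = 0 otherwise, for c among the four configurations ↑e, →e, ←e, ↔e of e. Then f_φ(→e) + f_φ(←e) = f_φ(↑e) + f_φ(↔e). -/

import Mathlib

namespace SubgraphsVsOrientations

/-- The four possible configurations of an edge in a fourientation:
`zero` = 0-way, `forward`/`backward` = the two 1-way configurations (relative to
a reference direction of the edge), `two` = 2-way. -/
inductive Four : Type
  | zero | forward | backward | two
deriving DecidableEq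

instance : Fintype Four where
  elems := {Four.zero, Four.forward, Four.backward, Four.two}
  complete := fun x => by cases x <;> simp

variable {V E : Type*}

/-- Whether configuration `c` allows traversal of the edge in direction `b`
(`b = true` means from `src` to `tgt`). -/
def allows : Four → Bool → Prop
  | Four.zero, _ => False
  | Four.forward, b => b = true
  | Four.backward, b => b = false
  | Four.two, _ => True

/-- An edge configuration is solid if it is 0-way or 2-way. -/
def IsSolid (c : Four) : Prop := c = Four.zero ∨ c = Four.two

/-- A configuration is 1-way if it is `forward` or `backward`. -/
def IsOneWay (c : Four) : Prop := c = Four.forward ∨ c = Four.backward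

/-- Reversing a configuration: swaps the two 1-way configurations,
fixes 0-way and 2-way. -/
def flipFour : Four → Four
  | Four.forward => Four.backward
  | Four.backward => Four.forward
  | c => c

/-- The 1-way configuration corresponding to direction `b`. -/
def oneWayFour (b : Bool) : Four := if b then Four.forward else Four.backward

/-- Tail of the arc `(e, b)` (the edge `e` traversed in direction `b`). -/
def arcTail (src tgt : E → V) (a : E × Bool) : V := if a.2 then src a.1 else tgt a.1

/-- Head of the arc `(e, b)`. -/
def arcHead (src tgt : E → V) (a : E × Bool) : V := if a.2 then tgt a.1 else src a.1

/-- One-step relation of the digraph `G⃗(A,B;φ)`: there is an arc from `x` to `y`, either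
a traversable directed edge of the fourientation `φ`, or an extra arc from `A ∪ B`. -/
def arcStep (src tgt : E → V) (A B : Set (V × V)) (φ : E → Four) (x y : V) : Prop :=
  (∃ a : E × Bool, allows (φ a.1) a.2 ∧ arcTail src tgt a = x ∧ arcHead src tgt a = y)
    ∨ (x, y) ∈ A ∪ B

/-- Reachability by a directed path in the digraph `G⃗(A,B;φ)`. -/
def reach (src tgt : E → V) (A B : Set (V × V)) (φ : E → Four) : V → V → Prop :=
  Relation.ReflTransGen (arcStep src tgt A B φ)

/-- A fourientation `φ` is `(A,B)`-valid: in `G⃗(A,B;φ)`, for every `(u,v) ∈ A` the vertex `v`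
cannot reach `u`, and for every `(u,v) ∈ B` the vertex `v` can reach `u`. -/
def IsValid (src tgt : E → V) (A B : Set (V × V)) (φ : E → Four) : Prop :=
  (∀ p ∈ A, ¬ reach src tgt A B φ p.2 p.1) ∧ (∀ p ∈ B, reach src tgt A B φ p.2 p.1)

/-- The set of solid edges of a fourientation. -/
def solidSet (φ : E → Four) : Set E := {e | IsSolid (φ e)}

/-- The fourientation associated to an orientation `σ : E → Bool` (every edge 1-way). -/
def toFour (σ : E → Bool) : E → Four := fun e => oneWayFour (σ e)

open Classical in
/-- The fourientation associated to a (spanning) subgraph `F ⊆ E`: edges of `F` are 2-way,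
the other edges are 0-way. -/
noncomputable def toFourSub (F : Set E) : E → Four :=
  fun e => if e ∈ F then Four.two else Four.zero

/-- The arc `(e,b)` is the arc of a 1-way edge of `φ`. -/
def oneWayArc (φ : E → Four) (a : E × Bool) : Prop := φ a.1 = oneWayFour a.2

/-- `Cyc(φ)`: the set of cyclic 1-way edges (arcs) of the fourientation `φ`, in the digraph
`G⃗(A,B;φ)`: the head of the arc can reach its tail. -/
def CycSet (src tgt : E → V) (A B : Set (V × V)) (φ : E → Four) : Set (E × Bool) :=
  {a | oneWayArc φ a ∧ reach src tgt A B φ (arcHead src tgt a) (arcTail src tgt a)}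

/-- `Acy(φ)`: the set of acyclic 1-way edges (arcs) of the fourientation `φ`. -/
def AcySet (src tgt : E → V) (A B : Set (V × V)) (φ : E → Four) : Set (E × Bool) :=
  {a | oneWayArc φ a ∧ ¬ reach src tgt A B φ (arcHead src tgt a) (arcTail src tgt a)}

/-- `l` is (the arc sequence of) a directed cycle: a nonempty closed chain of arcs
visiting no vertex twice. -/
def IsDirCycle (src tgt : E → V) (l : List (E × Bool)) : Prop :=
  ∃ h : l ≠ [],
    l.Chain' (fun a b => arcHead src tgt a = arcTail src tgt b) ∧
    arcHead src tgt (l.getLast h) = arcTail src tgt (l.head h) ∧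
    (l.map (arcTail src tgt)).Nodup

/-- Reversing the directed cycle `l` in the fourientation `φ`: all 1-way edges on the cycle are
reversed, other edges (in particular 2-way edges of the cycle) are unchanged. -/
def revCyc [DecidableEq E] (φ : E → Four) (l : List (E × Bool)) : E → Four :=
  fun e => if (e, true) ∈ l ∨ (e, false) ∈ l then flipFour (φ e) else φ e

/-- One cycle-reversal move: `ψ` is obtained from `φ` by reversing a directed cycle of `φ`. -/
def CycleStep (src tgt : E → V) [DecidableEq E] (φ ψ : E → Four) : Prop :=
  ∃ l, IsDirCycle src tgt l ∧ (∀ a ∈ l, allows (φ a.1) a.2) ∧ ψ = revCyc φ l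

/-- The edge `e` crosses the cut given by `V1` (in either direction). -/
def edgeCrosses (src tgt : E → V) (V1 : Set V) (e : E) : Prop :=
  (src e ∈ V1 ∧ tgt e ∉ V1) ∨ (tgt e ∈ V1 ∧ src e ∉ V1)

/-- The cut `V1 / V1ᶜ` defines a directed `(A,B)`-cocycle of `G⃗(A,B;φ)`: the set of arcs from
`V1` to `V1ᶜ` is nonempty, no arc of the digraph goes from `V1ᶜ` to `V1`, and no arc of
`A ∪ B` crosses the cut (in either direction). -/
def IsABCocycleCut (src tgt : E → V) (A B : Set (V × V)) (φ : E → Four) (V1 : Set V) : Prop :=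
  (∃ a : E × Bool, allows (φ a.1) a.2 ∧ arcTail src tgt a ∈ V1 ∧ arcHead src tgt a ∉ V1) ∧
  (∀ a : E × Bool, allows (φ a.1) a.2 → ¬ (arcTail src tgt a ∉ V1 ∧ arcHead src tgt a ∈ V1)) ∧
  (∀ p ∈ A ∪ B, ((p : V × V).1 ∈ V1 ↔ p.2 ∈ V1))

open Classical in
/-- Reversing the directed cocycle given by the cut `V1`: all 1-way edges crossing the cut are
reversed, other edges (in particular 0-way edges crossing the cut) are unchanged. -/
noncomputable def revCut (src tgt : E → V) (φ : E → Four) (V1 : Set V) : E → Four :=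
  fun e => if edgeCrosses src tgt V1 e then flipFour (φ e) else φ e

/-- One cocycle-reversal move: `ψ` is obtained from `φ` by reversing a directed
`(A,B)`-cocycle of `φ`. -/
def CocycleStep (src tgt : E → V) (A B : Set (V × V)) (φ ψ : E → Four) : Prop :=
  ∃ V1 : Set V, IsABCocycleCut src tgt A B φ V1 ∧ ψ = revCut src tgt φ V1

/-- One cycle- or cocycle-reversal move. -/
def CCStep (src tgt : E → V) (A B : Set (V × V)) [DecidableEq E] (φ ψ : E → Four) : Prop :=
  CycleStep src tgt φ ψ ∨ CocycleStep src tgt A B φ ψ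

/-- `φ` contains no cycle (of the graph `G`) made entirely of 2-way edges. -/
def NoTwoWayCycle (src tgt : E → V) (φ : E → Four) : Prop :=
  ¬ ∃ l : List (E × Bool), IsDirCycle src tgt l ∧ (l.map Prod.fst).Nodup ∧
      ∀ a ∈ l, φ a.1 = Four.two

/-- `φ` contains no `(A,B)`-cocycle (of the graph `G`) made entirely of 0-way edges:
there is no cut, not crossed by any arc of `A ∪ B`, crossed by at least one edge of `G`,
all of whose crossing edges are 0-way. -/
def NoZeroWayCocycle (src tgt : E → V) (A B : Set (V × V)) (φ : E → Four) : Prop :=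
  ¬ ∃ V1 : Set V, (∃ e, edgeCrosses src tgt V1 e) ∧
      (∀ e, edgeCrosses src tgt V1 e → φ e = Four.zero) ∧
      (∀ p ∈ A ∪ B, ((p : V × V).1 ∈ V1 ↔ p.2 ∈ V1))

/-- The subgraph `F` contains no cycle (it is a forest). -/
def NoCycleIn (src tgt : E → V) (F : Set E) : Prop :=
  ¬ ∃ l : List (E × Bool), IsDirCycle src tgt l ∧ (l.map Prod.fst).Nodup ∧ ∀ a ∈ l, a.1 ∈ F

/-- One undirected adjacency step in the graph `F ∪ A̲ ∪ B̲`. -/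
def usym (src tgt : E → V) (A B : Set (V × V)) (F : Set E) (x y : V) : Prop :=
  (∃ e ∈ F, (src e = x ∧ tgt e = y) ∨ (src e = y ∧ tgt e = x)) ∨
  (∃ p ∈ A ∪ B, ((p : V × V) = (x, y) ∨ p = (y, x)))

/-- Connectivity (by undirected paths) in the graph `F ∪ A̲ ∪ B̲`. -/
def ureach (src tgt : E → V) (A B : Set (V × V)) (F : Set E) : V → V → Prop :=
  Relation.ReflTransGen (usym src tgt A B F)

/-- The subgraph `F` is `(A,B)`-connected: the connected components of `F ∪ A̲ ∪ B̲`
coincide with those of `G ∪ A̲ ∪ B̲`. -/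
def ABConnected (src tgt : E → V) (A B : Set (V × V)) (F : Set E) : Prop :=
  ∀ x y, ureach src tgt A B F x y ↔ ureach src tgt A B Set.univ x y


section Statement8Aux

variable [DecidableEq E] (src tgt : E → V) (A B : Set (V × V)) (e : E) (φ : E → Four)

lemma arcHead_not (b : Bool) : arcHead src tgt (e, !b) = arcTail src tgt (e, b) := by
  cases b <;> simp [arcHead, arcTail]

lemma arcTail_not (b : Bool) : arcTail src tgt (e, !b) = arcHead src tgt (e, b) := by
  cases b <;> simp [arcHead, arcTail]

lemma reach_mono_zero (c : Four) {x y : V}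
    (h : reach src tgt A B (Function.update φ e Four.zero) x y) :
    reach src tgt A B (Function.update φ e c) x y := by
  refine Relation.ReflTransGen.mono ?_ _ _ h
  intro x y h
  rcases h with ⟨a, ha, ht, hh⟩ | h
  · left
    refine ⟨a, ?_, ht, hh⟩
    by_cases hae : a.1 = e
    · rw [hae, Function.update_self] at ha
      exact ha.elim
    · rw [Function.update_of_ne hae] at ha
      rwa [Function.update_of_ne hae]
  · exact Or.inr h

lemma reach_update_iff (c : Four) (x y : V) :
    reach src tgt A B (Function.update φ e c) x y ↔
      reach src tgt A B (Function.update φ e Four.zero) x y ∨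
        ∃ b, allows c b ∧
          reach src tgt A B (Function.update φ e Four.zero) x (arcTail src tgt (e, b)) ∧
          reach src tgt A B (Function.update φ e Four.zero) (arcHead src tgt (e, b)) y := by
  constructor
  · intro h
    induction h with
    | refl => exact Or.inl .refl
    | @tail m y h' step ih =>
      rcases step with ⟨⟨a1, b'⟩, ha, ht, hh⟩ | hab
      · by_cases hae : a1 = e
        · subst hae
          have hb' : allows c b' := by rwa [Function.update_self] at ha
          rcases ih with h0 | ⟨b, hb, h1, h2⟩
          · exact Or.inr ⟨b', hb', by rwa [ht], hh ▸ Relation.ReflTransGen.refl⟩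
          · by_cases hbb : b = b'
            · subst hbb
              exact Or.inr ⟨b, hb, h1, hh ▸ Relation.ReflTransGen.refl⟩
            · have hbne : b' = !b := by
                cases b <;> cases b' <;> simp_all
              subst hbne
              rw [arcHead_not] at hh
              exact Or.inl (by rwa [hh] at h1)
        · have step0 : arcStep src tgt A B (Function.update φ e Four.zero) m y := by
            left
            refine ⟨(a1, b'), ?_, ht, hh⟩
            rw [Function.update_of_ne hae] at ha
            rwa [Function.update_of_ne hae]
          rcases ih with h0 | ⟨b, hb, h1, h2⟩
          · exact Or.inl (h0.tail step0)
          · exact Or.inr ⟨b, hb, h1, h2.tail step0⟩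
      · rcases ih with h0 | ⟨b, hb, h1, h2⟩
        · exact Or.inl (h0.tail (Or.inr hab))
        · exact Or.inr ⟨b, hb, h1, h2.tail (Or.inr hab)⟩
  · rintro (h | ⟨b, hb, h1, h2⟩)
    · exact reach_mono_zero src tgt A B e φ c h
    · refine (reach_mono_zero src tgt A B e φ c h1).trans
        (Relation.ReflTransGen.trans ?_ (reach_mono_zero src tgt A B e φ c h2))
      refine Relation.ReflTransGen.single (Or.inl ⟨(e, b), ?_, rfl, rfl⟩)
      show allows (Function.update φ e c e) b
      rwa [Function.update_self]

end Statement8Aux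

set_option maxHeartbeats 1000000 in
open Classical in
/-- Let `φ` be a fourientation of `G \ e`, and for a configuration `c` of `e`
let `f_φ(c) = 1` if `φ ∪ c` is `(A,B)`-valid and `0` otherwise. Then
`f_φ(→e) + f_φ(←e) = f_φ(↑e) + f_φ(↔e)`. -/
theorem statement8 {V E : Type*} [Fintype V] [Fintype E] [DecidableEq E] (src tgt : E → V)
    (A B : Set (V × V)) (e : E) (φ : E → Four) :
    ((if IsValid src tgt A B (Function.update φ e Four.forward) then 1 else 0 : ℕ) +
      (if IsValid src tgt A B (Function.update φ e Four.backward) then 1 else 0)) =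
    ((if IsValid src tgt A B (Function.update φ e Four.zero) then 1 else 0) +
      (if IsValid src tgt A B (Function.update φ e Four.two) then 1 else 0)) := by
  classical
  set R : V → V → Prop := reach src tgt A B (Function.update φ e Four.zero) with hRdef
  set P : V × V → Prop := fun p => R p.2 (src e) ∧ R (tgt e) p.1 with hPdef
  set Q : V × V → Prop := fun p => R p.2 (tgt e) ∧ R (src e) p.1 with hQdef
  have hst : arcTail src tgt (e, true) = src e := rfl
  have hsh : arcHead src tgt (e, true) = tgt e := rfl
  have hbt : arcTail src tgt (e, false) = tgt e := rfl
  have hbh : arcHead src tgt (e, false) = src e := rfl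
  -- reach characterizations
  have hf : ∀ x y, reach src tgt A B (Function.update φ e Four.forward) x y ↔
      R x y ∨ (R x (src e) ∧ R (tgt e) y) := by
    intro x y
    rw [reach_update_iff]
    constructor
    · rintro (h | ⟨b, hb, h1, h2⟩)
      · exact Or.inl h
      · cases b
        · exact absurd hb (by simp [allows])
        · rw [hst] at h1; rw [hsh] at h2; exact Or.inr ⟨h1, h2⟩
    · rintro (h | ⟨h1, h2⟩)
      · exact Or.inl h
      · exact Or.inr ⟨true, rfl, by rwa [hst], by rwa [hsh]⟩
  have hb : ∀ x y, reach src tgt A B (Function.update φ e Four.backward) x y ↔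
      R x y ∨ (R x (tgt e) ∧ R (src e) y) := by
    intro x y
    rw [reach_update_iff]
    constructor
    · rintro (h | ⟨b, hbb, h1, h2⟩)
      · exact Or.inl h
      · cases b
        · rw [hbt] at h1; rw [hbh] at h2; exact Or.inr ⟨h1, h2⟩
        · exact absurd hbb (by simp [allows])
    · rintro (h | ⟨h1, h2⟩)
      · exact Or.inl h
      · exact Or.inr ⟨false, rfl, by rwa [hbt], by rwa [hbh]⟩
  have h2w : ∀ x y, reach src tgt A B (Function.update φ e Four.two) x y ↔
      R x y ∨ (R x (src e) ∧ R (tgt e) y) ∨ (R x (tgt e) ∧ R (src e) y) := by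
    intro x y
    rw [reach_update_iff]
    constructor
    · rintro (h | ⟨b, _, h1, h2⟩)
      · exact Or.inl h
      · cases b
        · rw [hbt] at h1; rw [hbh] at h2; exact Or.inr (Or.inr ⟨h1, h2⟩)
        · rw [hst] at h1; rw [hsh] at h2; exact Or.inr (Or.inl ⟨h1, h2⟩)
    · rintro (h | ⟨h1, h2⟩ | ⟨h1, h2⟩)
      · exact Or.inl h
      · exact Or.inr ⟨true, trivial, by rwa [hst], by rwa [hsh]⟩
      · exact Or.inr ⟨false, trivial, by rwa [hbt], by rwa [hbh]⟩
  -- validity characterizations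
  have Vf : IsValid src tgt A B (Function.update φ e Four.forward) ↔
      ((∀ p ∈ A, ¬ (R p.2 p.1 ∨ P p)) ∧ (∀ p ∈ B, R p.2 p.1 ∨ P p)) := by
    unfold IsValid
    simp only [hf, hPdef]
  have Vb : IsValid src tgt A B (Function.update φ e Four.backward) ↔
      ((∀ p ∈ A, ¬ (R p.2 p.1 ∨ Q p)) ∧ (∀ p ∈ B, R p.2 p.1 ∨ Q p)) := by
    unfold IsValid
    simp only [hb, hQdef]
  have V0 : IsValid src tgt A B (Function.update φ e Four.zero) ↔
      ((∀ p ∈ A, ¬ R p.2 p.1) ∧ (∀ p ∈ B, R p.2 p.1)) := Iff.rfl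
  have V2 : IsValid src tgt A B (Function.update φ e Four.two) ↔
      ((∀ p ∈ A, ¬ (R p.2 p.1 ∨ P p ∨ Q p)) ∧ (∀ p ∈ B, R p.2 p.1 ∨ P p ∨ Q p)) := by
    unfold IsValid
    simp only [h2w, hPdef, hQdef]
  -- key combinatorial lemma
  have L2 : ∀ p ∈ A ∪ B, ∀ p' ∈ A ∪ B, P p → Q p' → R p.2 p.1 ∧ R p'.2 p'.1 := by
    rintro p hp p' hp' ⟨h1, h2⟩ ⟨h3, h4⟩
    have arcp : R p.1 p.2 :=
      Relation.ReflTransGen.single (Or.inr (by simpa using hp))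
    have arcp' : R p'.1 p'.2 :=
      Relation.ReflTransGen.single (Or.inr (by simpa using hp'))
    exact ⟨h1.trans (h4.trans (arcp'.trans (h3.trans h2))),
      h3.trans (h2.trans (arcp.trans (h1.trans h4)))⟩
  have key1 : (IsValid src tgt A B (Function.update φ e Four.forward) ∧
      IsValid src tgt A B (Function.update φ e Four.backward)) ↔
      (IsValid src tgt A B (Function.update φ e Four.zero) ∧
      IsValid src tgt A B (Function.update φ e Four.two)) := by
    rw [Vf, Vb, V0, V2]
    constructor
    · rintro ⟨⟨af, bf⟩, ⟨ab, bb⟩⟩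
      have hA0 : ∀ p ∈ A, ¬ R p.2 p.1 := fun p hp h => af p hp (Or.inl h)
      have hB0 : ∀ p ∈ B, R p.2 p.1 := by
        intro p hp
        rcases bf p hp with h | h
        · exact h
        rcases bb p hp with h' | h'
        · exact h'
        exact (L2 p (Or.inr hp) p (Or.inr hp) h h').1
      refine ⟨⟨hA0, hB0⟩, ⟨?_, fun p hp => Or.inl (hB0 p hp)⟩⟩
      intro p hp
      rintro (h | h | h)
      · exact hA0 p hp h
      · exact af p hp (Or.inr h)
      · exact ab p hp (Or.inr h)
    · rintro ⟨⟨a0, b0⟩, ⟨a2, b2⟩⟩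
      exact ⟨⟨fun p hp => by rintro (h | h); exacts [a0 p hp h, a2 p hp (Or.inr (Or.inl h))],
          fun p hp => Or.inl (b0 p hp)⟩,
        ⟨fun p hp => by rintro (h | h); exacts [a0 p hp h, a2 p hp (Or.inr (Or.inr h))],
          fun p hp => Or.inl (b0 p hp)⟩⟩
  have key2 : (IsValid src tgt A B (Function.update φ e Four.forward) ∨
      IsValid src tgt A B (Function.update φ e Four.backward)) ↔
      (IsValid src tgt A B (Function.update φ e Four.zero) ∨
      IsValid src tgt A B (Function.update φ e Four.two)) := by
    rw [Vf, Vb, V0, V2]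
    constructor
    · rintro (⟨af, bf⟩ | ⟨ab, bb⟩)
      · have hA0 : ∀ p ∈ A, ¬ R p.2 p.1 := fun p hp h => af p hp (Or.inl h)
        by_cases hB0 : ∀ p ∈ B, R p.2 p.1
        · exact Or.inl ⟨hA0, hB0⟩
        · push_neg at hB0
          obtain ⟨p, hp, hpr⟩ := hB0
          have hPp : P p := (bf p hp).resolve_left hpr
          refine Or.inr ⟨?_, fun p' hp' => (bf p' hp').imp id Or.inl⟩
          intro p' hp'
          rintro (h | h | h)
          · exact hA0 p' hp' h
          · exact af p' hp' (Or.inr h)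
          · exact hA0 p' hp' (L2 p (Or.inr hp) p' (Or.inl hp') hPp h).2
      · have hA0 : ∀ p ∈ A, ¬ R p.2 p.1 := fun p hp h => ab p hp (Or.inl h)
        by_cases hB0 : ∀ p ∈ B, R p.2 p.1
        · exact Or.inl ⟨hA0, hB0⟩
        · push_neg at hB0
          obtain ⟨p, hp, hpr⟩ := hB0
          have hQp : Q p := (bb p hp).resolve_left hpr
          refine Or.inr ⟨?_, fun p' hp' => ?_⟩
          · intro p' hp'
            rintro (h | h | h)
            · exact hA0 p' hp' h
            · exact hA0 p' hp' (L2 p' (Or.inl hp') p (Or.inr hp) h hQp).1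
            · exact ab p' hp' (Or.inr h)
          · rcases bb p' hp' with h | h
            · exact Or.inl h
            · exact Or.inr (Or.inr h)
    · rintro (⟨a0, b0⟩ | ⟨a2, b2⟩)
      · by_cases hAP : ∀ p ∈ A, ¬ P p
        · exact Or.inl ⟨fun p hp => by rintro (h | h); exacts [a0 p hp h, hAP p hp h],
            fun p hp => Or.inl (b0 p hp)⟩
        · push_neg at hAP
          obtain ⟨p, hp, hPp⟩ := hAP
          refine Or.inr ⟨fun p' hp' => ?_, fun p' hp' => Or.inl (b0 p' hp')⟩
          rintro (h | h)
          · exact a0 p' hp' h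
          · exact a0 p hp (L2 p (Or.inl hp) p' (Or.inl hp') hPp h).1
      · by_cases hBP : ∀ p ∈ B, R p.2 p.1 ∨ P p
        · exact Or.inl ⟨fun p hp => by
            rintro (h | h)
            exacts [a2 p hp (Or.inl h), a2 p hp (Or.inr (Or.inl h))], hBP⟩
        · push_neg at hBP
          obtain ⟨p, hp, hpr⟩ := hBP
          have hQp : Q p := by
            rcases b2 p hp with h | h | h
            · exact absurd h hpr.1
            · exact absurd h hpr.2
            · exact h
          refine Or.inr ⟨fun p' hp' => by
              rintro (h | h)
              exacts [a2 p' hp' (Or.inl h), a2 p' hp' (Or.inr (Or.inr h))],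
            fun p' hp' => ?_⟩
          rcases b2 p' hp' with h | h | h
          · exact Or.inl h
          · exact Or.inl (L2 p' (Or.inr hp') p (Or.inr hp) h hQp).1
          · exact Or.inr h
  clear Vf Vb V0 V2 L2 hf hb h2w hst hsh hbt hbh hPdef hQdef hRdef
  clear_value R P Q
  clear R P Q
  by_cases h1 : IsValid src tgt A B (Function.update φ e Four.forward) <;>
    by_cases h2 : IsValid src tgt A B (Function.update φ e Four.backward) <;>
    by_cases h3 : IsValid src tgt A B (Function.update φ e Four.zero) <;>
    by_cases h4 : IsValid src tgt A B (Function.update φ e Four.two) <;>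
    simp only [h1, h2, h3, h4, if_true, if_false] <;> tauto
end SubgraphsVsOrientations
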